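/- Let f : ℕ → ℂ be multiplicative with |f(n)| ≤ 1 for all n. Then the limit M_p(f) = lim_{x→∞} (1/x) ∑_{n ≤ x} f_p(n) exists and equals (1 − 1/p) ∑_{k ≥ 0} f(p^k)/p^k, where f_p is the multiplicative function agreeing with f on powers of the prime p and equal to 1 on powers of all other primes. -/

import Mathlib

open Finset Filter

/-- Count of `n ∈ [1,x]` with `v_p(n) = k`. -/
lemma count_fiber (p : ℕ) (hp : p.Prime) (x k : ℕ) :
    ((Finset.Icc 1 x).filter (fun n => n.factorization p = k)).card
      = x / p ^ k - x / p ^ (k + 1) := by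
  rw [show Finset.Icc 1 x = Finset.Ioc 0 x from Finset.Icc_add_one_left_eq_Ioc 0 x]
  have hd1 : (((Finset.Ioc 0 x).filter (p ^ k ∣ ·)).filter (fun n => p ^ (k+1) ∣ n)).card
      = x / p ^ (k + 1) := by
    rw [Finset.filter_filter]
    rw [Finset.filter_congr (q := fun n => p ^ (k+1) ∣ n)
      (fun n _ => ⟨fun h => h.2, fun h => ⟨dvd_trans (pow_dvd_pow p (Nat.le_succ k)) h, h⟩⟩)]
    exact Nat.Ioc_filter_dvd_card_eq_div x (p ^ (k+1))
  have hd2 : (((Finset.Ioc 0 x).filter (p ^ k ∣ ·)).filter (fun n => ¬ p ^ (k+1) ∣ n)).card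
      = ((Finset.Ioc 0 x).filter (fun n => n.factorization p = k)).card := by
    rw [Finset.filter_filter]
    congr 1
    apply Finset.filter_congr
    intro n hn
    have hn0 : n ≠ 0 := by
      simp only [Finset.mem_Ioc] at hn; omega
    rw [hp.pow_dvd_iff_le_factorization hn0, hp.pow_dvd_iff_le_factorization hn0]
    omega
  have h3 := Finset.card_filter_add_card_filter_not
    (s := (Finset.Ioc 0 x).filter (p ^ k ∣ ·)) (p := fun n => p ^ (k+1) ∣ n)
  rw [hd1, hd2, Nat.Ioc_filter_dvd_card_eq_div x (p ^ k)] at h3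
  omega

lemma nat_div_tendsto (m : ℕ) (hm : 0 < m) :
    Tendsto (fun x : ℕ => ((x / m : ℕ) : ℝ) / x) atTop (nhds (1 / m)) := by
  have hlow : Tendsto (fun x : ℕ => 1 / (m : ℝ) - 1 / x) atTop (nhds (1 / m)) := by
    have := (tendsto_const_nhds (x := 1 / (m : ℝ)) (f := atTop)).sub
      tendsto_one_div_atTop_nhds_zero_nat
    simpa using this
  apply tendsto_of_tendsto_of_tendsto_of_le_of_le' hlow tendsto_const_nhds
  · filter_upwards [eventually_ge_atTop 1] with x hx
    have hx0 : (0 : ℝ) < x := by exact_mod_cast hx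
    have hm0 : (0 : ℝ) < m := by exact_mod_cast hm
    have key1 : (x : ℝ) - m < m * ((x / m : ℕ) : ℝ) := by
      have h1 := Nat.div_add_mod x m
      have h2 := Nat.mod_lt x hm
      have h1' : (m : ℝ) * ((x / m : ℕ) : ℝ) + ((x % m : ℕ) : ℝ) = x := by exact_mod_cast h1
      have h2' : ((x % m : ℕ) : ℝ) < m := by exact_mod_cast h2
      linarith
    rw [div_sub_div _ _ hm0.ne' hx0.ne', div_le_div_iff₀ (by positivity) hx0]
    nlinarith [mul_le_mul_of_nonneg_right key1.le hx0.le]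
  · filter_upwards [eventually_ge_atTop 1] with x hx
    have hx0 : (0 : ℝ) < x := by exact_mod_cast hx
    have hm0 : (0 : ℝ) < m := by exact_mod_cast hm
    have key2 : ((x / m : ℕ) : ℝ) ≤ (x : ℝ) / m := Nat.cast_div_le
    rw [div_le_div_iff₀ hx0 hm0]
    rw [le_div_iff₀ hm0] at key2
    linarith

lemma nat_div_tendsto_C (m : ℕ) (hm : 0 < m) :
    Tendsto (fun x : ℕ => ((x / m : ℕ) : ℂ) / x) atTop (nhds (1 / m)) := by
  have h := (Complex.continuous_ofReal.tendsto _).comp (nat_div_tendsto m hm)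
  simp only [Function.comp_def] at h
  convert h using 2 <;> push_cast <;> ring

theorem mean_value_local_factor
    (f : ℕ → ℂ) (hf1 : f 1 = 1)
    (hfmul : ∀ m n, Nat.Coprime m n → f (m * n) = f m * f n)
    (hfb : ∀ n, ‖f n‖ ≤ 1)
    (p : ℕ) (hp : p.Prime) :
    Tendsto (fun x : ℕ => (x : ℂ)⁻¹ * ∑ n ∈ Finset.Icc 1 x, f (p ^ (n.factorization p)))
      atTop
      (nhds ((1 - 1 / (p : ℂ)) * ∑' k : ℕ, f (p ^ k) / (p : ℂ) ^ k)) := by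
  have hp1 : 1 < p := hp.one_lt
  have hpC : (p : ℂ) ≠ 0 := Nat.cast_ne_zero.mpr hp.pos.ne'
  have key : ∀ x : ℕ, (x : ℂ)⁻¹ * ∑ n ∈ Finset.Icc 1 x, f (p ^ (n.factorization p))
      = ∑' k : ℕ, f (p ^ k) * (((x / p ^ k : ℕ) : ℂ) - ((x / p ^ (k+1) : ℕ) : ℂ)) / x := by
    intro x
    have hmaps : ∀ n ∈ Finset.Icc 1 x, n.factorization p ∈ Finset.range (x + 1) := by
      intro n hn
      simp only [Finset.mem_Icc] at hn
      simp only [Finset.mem_range]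
      have h1 : p ^ n.factorization p ∣ n := Nat.ordProj_dvd n p
      have h2 : p ^ n.factorization p ≤ n := Nat.le_of_dvd (by omega) h1
      have h3 : n.factorization p < p ^ n.factorization p := Nat.lt_pow_self hp1
      omega
    rw [← Finset.sum_fiberwise_of_maps_to hmaps (fun n => f (p ^ n.factorization p))]
    rw [tsum_eq_sum (s := Finset.range (x + 1)) (by
      intro k hk
      simp only [Finset.mem_range, not_lt] at hk
      have hpk : x < p ^ k := by
        calc x < k := by omega
        _ < 2 ^ k := Nat.lt_two_pow_self
        _ ≤ p ^ k := Nat.pow_le_pow_left hp.two_le k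
      have hpk1 : x < p ^ (k+1) := lt_of_lt_of_le hpk (Nat.pow_le_pow_right hp.pos (by omega))
      rw [Nat.div_eq_of_lt hpk, Nat.div_eq_of_lt hpk1]
      simp)]
    rw [Finset.mul_sum]
    apply Finset.sum_congr rfl
    intro k _
    have hsum : ∑ n ∈ (Finset.Icc 1 x).filter (fun n => n.factorization p = k),
        f (p ^ n.factorization p)
        = ((x / p ^ k : ℕ) - (x / p ^ (k+1) : ℕ) : ℕ) * f (p ^ k) := by
      rw [Finset.sum_congr rfl (fun n hn => by
        simp only [Finset.mem_filter] at hn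
        rw [hn.2])]
      rw [Finset.sum_const, count_fiber p hp x k, nsmul_eq_mul]
    rw [hsum]
    have hba : x / p ^ (k+1) ≤ x / p ^ k :=
      Nat.div_le_div_left (Nat.pow_le_pow_right hp.pos (Nat.le_succ k))
        (Nat.pow_pos (n := k) hp.pos)
    rw [Nat.cast_sub hba]
    ring
  simp only [key]
  have htarget : (1 - 1 / (p : ℂ)) * ∑' k : ℕ, f (p ^ k) / (p : ℂ) ^ k
      = ∑' k : ℕ, f (p ^ k) * (1 / (p : ℂ) ^ k - 1 / (p : ℂ) ^ (k+1)) := by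
    rw [← tsum_mul_left]
    apply tsum_congr
    intro k
    field_simp
    ring
  rw [htarget]
  apply tendsto_tsum_of_dominated_convergence (bound := fun k => ((p : ℝ) ^ k)⁻¹)
  · have h1 : (p : ℝ)⁻¹ < 1 := by
      rw [inv_lt_one_iff₀]
      right
      exact_mod_cast hp1
    have := summable_geometric_of_lt_one (r := (p : ℝ)⁻¹) (by positivity) h1
    simpa [inv_pow] using this
  · intro k
    have hA := nat_div_tendsto_C (p ^ k) (Nat.pow_pos (n := k) hp.pos)
    have hB := nat_div_tendsto_C (p ^ (k+1)) (Nat.pow_pos (n := k+1) hp.pos)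
    have := ((hA.sub hB).const_mul (f (p ^ k)))
    simp only [mul_div_assoc, sub_div]
    convert this using 2 <;> push_cast <;> ring
  · filter_upwards [eventually_ge_atTop 1] with x hx
    intro k
    have hx0 : (0 : ℝ) < x := by exact_mod_cast hx
    have hba : x / p ^ (k+1) ≤ x / p ^ k := by
      apply Nat.div_le_div_left (Nat.pow_le_pow_right hp.pos (Nat.le_succ k))
        (Nat.pow_pos (n := k) hp.pos)
    rw [norm_div, norm_mul]
    have hd : ‖((x / p ^ k : ℕ) : ℂ) - ((x / p ^ (k+1) : ℕ) : ℂ)‖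
        = ((x / p ^ k : ℕ) - (x / p ^ (k+1) : ℕ) : ℕ) := by
      rw [← Nat.cast_sub hba, Complex.norm_natCast]
    rw [hd, Complex.norm_natCast]
    have h1 : ‖f (p ^ k)‖ ≤ 1 := hfb _
    have h2 : (((x / p ^ k : ℕ) - (x / p ^ (k+1) : ℕ) : ℕ) : ℝ) ≤ (x : ℝ) / (p : ℝ) ^ k := by
      calc (((x / p ^ k : ℕ) - (x / p ^ (k+1) : ℕ) : ℕ) : ℝ) ≤ ((x / p ^ k : ℕ) : ℝ) := by
            exact_mod_cast Nat.cast_le.mpr (Nat.sub_le _ _)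
        _ ≤ (x : ℝ) / ((p : ℝ) ^ k) := by
            have := Nat.cast_div_le (α := ℝ) (m := x) (n := p ^ k)
            push_cast at this
            exact this
    have hpk0 : (0 : ℝ) < (p : ℝ) ^ k := by positivity
    calc ‖f (p ^ k)‖ * (((x / p ^ k : ℕ) - (x / p ^ (k+1) : ℕ) : ℕ) : ℝ) / (x : ℝ)
        ≤ 1 * ((x : ℝ) / (p : ℝ) ^ k) / (x : ℝ) := by gcongr <;> positivity
      _ = ((p : ℝ) ^ k)⁻¹ := by field_simp
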